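/- If α > 0 and A ⊆ ℕ has asymptotic density (A ∈ 𝒟), then d̄_α(A) = d(A). -/

import Mathlib

open Filter Topology

noncomputable section

/-- The space `ℓ∞` of bounded real sequences. -/
abbrev EllInfty : Type := lp (fun _ : ℕ => ℝ) ⊤

/-- The characteristic sequence of a set `A ⊆ ℕ` (as a plain function). -/
def chiFun (A : Set ℕ) : ℕ → ℝ := A.indicator 1

lemma chiFun_memℓp (A : Set ℕ) : Memℓp (chiFun A) ⊤ := by
  apply memℓp_infty
  refine ⟨1, ?_⟩
  rintro r ⟨n, rfl⟩
  by_cases h : n ∈ A <;> simp [chiFun, Set.indicator, h]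

/-- The characteristic sequence of a set `A ⊆ ℕ` as an element of `ℓ∞`. -/
def chi (A : Set ℕ) : EllInfty := ⟨chiFun A, chiFun_memℓp A⟩

/-- `A(n) = |A ∩ {1,…,n}|` (as a real number). -/
def count (A : Set ℕ) (n : ℕ) : ℝ := ∑ k ∈ Finset.Icc 1 n, chiFun A k

/-- `A` has asymptotic density `d`, i.e. `A(n)/n → d`. -/
def HasDensity (A : Set ℕ) (d : ℝ) : Prop :=
  Tendsto (fun n => count A n / n) atTop (𝓝 d)

/-- A density measure: a finitely additive measure `μ : 𝒫(ℕ) → [0,1]` with `μ(ℕ) = 1`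
which extends the asymptotic density. -/
def IsDensityMeasure (μ : Set ℕ → ℝ) : Prop :=
  (∀ A B : Set ℕ, Disjoint A B → μ (A ∪ B) = μ A + μ B) ∧
  (∀ A : Set ℕ, μ A ∈ Set.Icc (0 : ℝ) 1) ∧
  μ Set.univ = 1 ∧
  (∀ A d, HasDensity A d → μ A = d)

/-- The sequence of Cesàro averages `(x₁ + … + xₙ)/n`. -/
def cesaroAvg (x : ℕ → ℝ) (n : ℕ) : ℝ := (∑ i ∈ Finset.Icc 1 n, x i) / n

/-- `x` has Cesàro mean `c`. -/
def HasCesaro (x : ℕ → ℝ) (c : ℝ) : Prop := Tendsto (cesaroAvg x) atTop (𝓝 c)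

/-- A functional on `ℓ∞` is positive if it is nonnegative on nonnegative sequences. -/
def IsPositiveFunctional (f : EllInfty → ℝ) : Prop :=
  ∀ x : EllInfty, (∀ n, 0 ≤ x n) → 0 ≤ f x

/-- A functional on `ℓ∞` extends the Cesàro mean. -/
def ExtendsCesaro (f : EllInfty → ℝ) : Prop :=
  ∀ (x : EllInfty) (c : ℝ), HasCesaro (⇑x) c → f x = c

/-- The set of positive continuous linear functionals on `ℓ∞` extending the Cesàro mean. -/
def Cesex : Set (EllInfty →L[ℝ] ℝ) :=
  {f | IsPositiveFunctional f ∧ ExtendsCesaro f}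

/-- `f_C(x) = sup { f(x) : f ∈ Cesex }`. -/
def fC (x : EllInfty) : ℝ := sSup ((fun f : EllInfty →L[ℝ] ℝ => f x) '' Cesex)

/-- `Θ_{θ,n}(x) = (Σ_{θn < i ≤ n} x_i) / (n(1-θ))`. -/
def Theta (x : ℕ → ℝ) (θ : ℝ) (n : ℕ) : ℝ :=
  (∑ i ∈ Finset.Icc 1 n, if θ * n < (i : ℝ) then x i else 0) / (n * (1 - θ))

/-- `Θ_θ(x) = limsup_{n → ∞} Θ_{θ,n}(x)`. -/
def ThetaSup (x : ℕ → ℝ) (θ : ℝ) : ℝ := limsup (Theta x θ) atTop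

/-- `t(x) = lim_{θ → 1⁻} Θ_θ(x)`. -/
def tFun (x : ℕ → ℝ) : ℝ := limUnder (𝓝[<] (1 : ℝ)) (ThetaSup x)

/-- `A_α(n) = Σ_{k ∈ A, k ≤ n} k^α`. -/
def aSum (A : Set ℕ) (α : ℝ) (n : ℕ) : ℝ :=
  ∑ k ∈ Finset.Icc 1 n, chiFun A k * (k : ℝ) ^ α

/-- The upper `α`-density `d̄_α(A) = limsup_{n→∞} A_α(n)/ℕ_α(n)`. -/
def upperADens (A : Set ℕ) (α : ℝ) : ℝ :=
  limsup (fun n => aSum A α n / aSum Set.univ α n) atTop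

/-- The lower `α`-density `d̲_α(A) = liminf_{n→∞} A_α(n)/ℕ_α(n)`. -/
def lowerADens (A : Set ℕ) (α : ℝ) : ℝ :=
  liminf (fun n => aSum A α n / aSum Set.univ α n) atTop

/-- `d̄_∞(A) = lim_{α→∞} d̄_α(A)`. -/
def dInftyUpper (A : Set ℕ) : ℝ := limUnder (atTop : Filter ℝ) (upperADens A)

/-- `d̲_∞(A) = lim_{α→∞} d̲_α(A)`. -/
def dInftyLower (A : Set ℕ) : ℝ := limUnder (atTop : Filter ℝ) (lowerADens A)

/-- The quotient `(A(n) - A(⌊θn⌋))/(n - θn)` appearing in the Pólya density. -/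
def polyaQuot (A : Set ℕ) (θ : ℝ) (n : ℕ) : ℝ :=
  (count A n - count A ⌊θ * n⌋₊) / (n - θ * n)

/-- The upper Pólya density `p̄(A)`. -/
def pUpper (A : Set ℕ) : ℝ :=
  limUnder (𝓝[<] (1 : ℝ)) (fun θ => limsup (polyaQuot A θ) atTop)

/-- The lower Pólya density `p̲(A)`. -/
def pLower (A : Set ℕ) : ℝ :=
  limUnder (𝓝[<] (1 : ℝ)) (fun θ => liminf (polyaQuot A θ) atTop)

/-- `λ̄(A) = sup { μ(A) : μ a density measure }`. -/
def lamUpper (A : Set ℕ) : ℝ := sSup {r | ∃ μ, IsDensityMeasure μ ∧ μ A = r}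

/-- `λ̲(A) = inf { μ(A) : μ a density measure }`. -/
def lamLower (A : Set ℕ) : ℝ := sInf {r | ∃ μ, IsDensityMeasure μ ∧ μ A = r}

/-- `d̄*(A) = inf { d(B) : B ⊇ A, B ∈ 𝒟 }`. -/
def dUpperStar (A : Set ℕ) : ℝ := sInf {r | ∃ B, A ⊆ B ∧ HasDensity B r}

/-- `d̲*(A) = sup { d(B) : B ⊆ A, B ∈ 𝒟 }`. -/
def dLowerStar (A : Set ℕ) : ℝ := sSup {r | ∃ B, B ⊆ A ∧ HasDensity B r}

/-- The `ℱ`-limit of a (bounded) real sequence along an ultrafilter `ℱ`: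
the unique `L` with `Tendsto x ℱ (𝓝 L)` (when it exists). -/
def ulim (F : Ultrafilter ℕ) (x : ℕ → ℝ) : ℝ := limUnder (F : Filter ℕ) x

/-- An ultrafilter is free (non-principal) iff it contains all cofinite sets. -/
def IsFreeUltrafilter (F : Ultrafilter ℕ) : Prop := (F : Filter ℕ) ≤ Filter.cofinite

/-- The set of positive functionals extending Cesàro mean, inside the weak-* dual of `ℓ∞`. -/
def CesexW : Set (WeakDual ℝ EllInfty) :=
  {f | (∀ x : EllInfty, (∀ n, 0 ≤ x n) → 0 ≤ f x) ∧
    ∀ (x : EllInfty) (c : ℝ), HasCesaro (⇑x) c → f x = c}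

private lemma chiFun_nonneg' (A : Set ℕ) (k : ℕ) : 0 ≤ chiFun A k := by
  by_cases h : k ∈ A <;> simp [chiFun, Set.indicator, h]

private lemma chiFun_le_one' (A : Set ℕ) (k : ℕ) : chiFun A k ≤ 1 := by
  by_cases h : k ∈ A <;> simp [chiFun, Set.indicator, h]

private lemma chiFun_univ' (k : ℕ) : chiFun Set.univ k = 1 := by
  simp [chiFun]

private lemma count_nonneg' (A : Set ℕ) (n : ℕ) : 0 ≤ count A n :=
  Finset.sum_nonneg fun k _ => chiFun_nonneg' A k

private lemma count_le' (A : Set ℕ) (n : ℕ) : count A n ≤ n := by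
  calc count A n ≤ ∑ _k ∈ Finset.Icc 1 n, (1:ℝ) :=
        Finset.sum_le_sum fun k _ => chiFun_le_one' A k
    _ = n := by simp

private lemma tele_sum (f : ℕ → ℝ) {m n : ℕ} (h : m ≤ n) :
    ∑ k ∈ Finset.Ico m n, (f (k+1) - f k) = f n - f m := by
  induction n, h using Nat.le_induction with
  | base => simp
  | succ n hmn ih =>
    rw [Finset.sum_Ico_succ_top hmn, ih]; ring

private lemma bpow_mono' (α : ℝ) (hα : 0 < α) {j k : ℕ} (h : j ≤ k) :
    (j:ℝ)^α ≤ (k:ℝ)^α :=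
  Real.rpow_le_rpow (by positivity) (by exact_mod_cast h) hα.le

private lemma count_succ' (A : Set ℕ) (n : ℕ) :
    count A (n+1) = count A n + chiFun A (n+1) := by
  unfold count
  rw [Finset.sum_Icc_succ_top (Nat.succ_le_succ (Nat.zero_le n))]

private lemma aSum_succ' (A : Set ℕ) (α : ℝ) (n : ℕ) :
    aSum A α (n+1) = aSum A α n + chiFun A (n+1) * (((n:ℝ)+1)) ^ α := by
  unfold aSum
  rw [Finset.sum_Icc_succ_top (Nat.succ_le_succ (Nat.zero_le n))]
  push_cast
  ring

private lemma abel_identity (A : Set ℕ) (α : ℝ) (d : ℝ) (n : ℕ) :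
    aSum A α n - d * aSum Set.univ α n
      = (count A n - d*n) * (n:ℝ)^α
        - ∑ k ∈ Finset.Ico 1 n,
            (count A k - d*k) * (((k:ℝ)+1)^α - (k:ℝ)^α) := by
  induction n with
  | zero => simp [aSum, count]
  | succ n ih =>
    rcases Nat.eq_zero_or_pos n with rfl | hn
    · simp only [aSum, count, zero_add, Finset.Icc_self, Finset.sum_singleton,
        Finset.Ico_self, Finset.sum_empty, Nat.cast_one, Real.one_rpow, chiFun_univ']
      ring
    · rw [aSum_succ', aSum_succ', count_succ', Finset.sum_Ico_succ_top hn,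
        chiFun_univ']
      push_cast
      linear_combination ih

private lemma aSum_univ_ge (α : ℝ) (hα : 0 < α) (n : ℕ) :
    ((n:ℝ)/2) * ((n:ℝ)/4)^α ≤ aSum Set.univ α n := by
  have hsub : Finset.Ioc (n/2) n ⊆ Finset.Icc 1 n := by
    intro k hk
    simp only [Finset.mem_Ioc, Finset.mem_Icc] at hk ⊢
    omega
  have hterm : ∀ k ∈ Finset.Ioc (n/2) n, ((n:ℝ)/4)^α ≤ chiFun Set.univ k * (k:ℝ)^α := by
    intro k hk
    rw [chiFun_univ', one_mul]
    apply Real.rpow_le_rpow (by positivity) _ hα.le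
    simp only [Finset.mem_Ioc] at hk
    have h4 : n ≤ 4 * k := by omega
    have : (n:ℝ) ≤ 4 * k := by exact_mod_cast h4
    linarith
  have hcard : ((n:ℝ)/2) ≤ (Finset.Ioc (n/2) n).card := by
    rw [Nat.card_Ioc]
    have hle : n/2 ≤ n := Nat.div_le_self _ _
    have h1 : (↑(n - n/2) : ℝ) = (n:ℝ) - (↑(n/2):ℝ) := by
      push_cast [hle]; ring
    have h2 : (↑(n/2):ℝ) ≤ (n:ℝ)/2 := by
      have := Nat.cast_div_le (α := ℝ) (m := n) (n := 2)
      simpa using this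
    rw [h1]; linarith
  calc ((n:ℝ)/2) * ((n:ℝ)/4)^α
      ≤ (Finset.Ioc (n/2) n).card * ((n:ℝ)/4)^α := by
        apply mul_le_mul_of_nonneg_right hcard (by positivity)
    _ ≤ ∑ k ∈ Finset.Ioc (n/2) n, chiFun Set.univ k * (k:ℝ)^α := by
        rw [← nsmul_eq_mul]
        exact Finset.card_nsmul_le_sum _ _ _ hterm
    _ ≤ aSum Set.univ α n := by
        apply Finset.sum_le_sum_of_subset_of_nonneg hsub
        intro k _ _
        have := chiFun_nonneg' Set.univ k
        positivity

set_option maxHeartbeats 1000000 in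
/-- If `α > 0` and `A` has asymptotic density `d(A)`, then `d̄_α(A) = d(A)`. -/
theorem stmt3 (α : ℝ) (hα : 0 < α) (A : Set ℕ) (d : ℝ) (hd : HasDensity A d) :
    upperADens A α = d := by
  have hK : (0:ℝ) < 2 * (4:ℝ)^α := by positivity
  set K : ℝ := 2 * (4:ℝ)^α with hKdef
  -- n * n^α ≤ K * T n
  have hnb : ∀ n : ℕ, (n:ℝ) * (n:ℝ)^α ≤ K * aSum Set.univ α n := by
    intro n
    have h1 := aSum_univ_ge α hα n
    have h2 : ((n:ℝ)/4)^α = (n:ℝ)^α / (4:ℝ)^α :=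
      Real.div_rpow (Nat.cast_nonneg n) (by norm_num : (0:ℝ) ≤ 4) α
    rw [h2] at h1
    have h4 : (0:ℝ) < (4:ℝ)^α := by positivity
    calc (n:ℝ) * (n:ℝ)^α = K * (((n:ℝ)/2) * ((n:ℝ)^α / (4:ℝ)^α)) := by
          rw [hKdef]; field_simp
      _ ≤ K * aSum Set.univ α n := by
          apply mul_le_mul_of_nonneg_left h1 hK.le
  suffices htend : Tendsto (fun n => aSum A α n / aSum Set.univ α n) atTop (𝓝 d) by
    exact htend.limsup_eq
  rw [Metric.tendsto_atTop]
  intro ε hε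
  set ε' : ℝ := ε / (4*K) with hε'def
  have hε' : 0 < ε' := by positivity
  obtain ⟨N₁, hN₁⟩ := Metric.tendsto_atTop.1 hd ε' hε'
  set N : ℕ := max N₁ 1 with hNdef
  have hN1 : 1 ≤ N := le_max_right _ _
  -- eventual smallness of E k := count A k - d*k
  have hE : ∀ n : ℕ, N ≤ n → |count A n - d*n| ≤ ε' * n := by
    intro n hn
    have hn1 : 1 ≤ n := le_trans hN1 hn
    have hn0 : (0:ℝ) < n := by exact_mod_cast hn1
    have := hN₁ n (le_trans (le_max_left _ _) hn)
    rw [Real.dist_eq] at this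
    have heq : count A n - d*n = (count A n / n - d) * n := by field_simp
    rw [heq, abs_mul, abs_of_pos hn0]
    exact mul_le_mul_of_nonneg_right this.le hn0.le
  have hEall : ∀ k : ℕ, |count A k - d*k| ≤ (1+|d|) * k := by
    intro k
    have h1 := count_le' A k
    have h2 := count_nonneg' A k
    have h3 : |count A k - d*k| ≤ |count A k| + |d*k| := abs_sub _ _
    rw [abs_of_nonneg h2, abs_mul, Nat.abs_cast] at h3
    nlinarith [abs_nonneg d, Nat.cast_nonneg (α := ℝ) k]
  set Cst : ℝ := (1+|d|) * N * (N:ℝ)^α with hCdef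
  have hCst : 0 ≤ Cst := by positivity
  -- key quantitative bound
  have hkey : ∀ n : ℕ, N ≤ n →
      |aSum A α n - d * aSum Set.univ α n| ≤ 2*ε' * ((n:ℝ) * (n:ℝ)^α) + Cst := by
    intro n hn
    rw [abel_identity A α d n]
    have hbn : ∀ k : ℕ, k ≤ n → (k:ℝ)^α ≤ (n:ℝ)^α := fun k hk => bpow_mono' α hα hk
    have hb1 : ∀ k : ℕ, (0:ℝ) ≤ ((k:ℝ)+1)^α - (k:ℝ)^α := by
      intro k
      have : ((k:ℝ)+1) = ((k+1 : ℕ) : ℝ) := by push_cast; ring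
      rw [this]
      have := bpow_mono' α hα (Nat.le_succ k)
      linarith
    -- split the sum
    have hsplit : Finset.Ico 1 n = Finset.Ico 1 N ∪ Finset.Ico N n :=
      (Finset.Ico_union_Ico_eq_Ico hN1 hn).symm
    have hdisj : Disjoint (Finset.Ico 1 N) (Finset.Ico N n) := by
      apply Finset.Ico_disjoint_Ico_consecutive
    have habs : |∑ k ∈ Finset.Ico 1 n, (count A k - d*k) * (((k:ℝ)+1)^α - (k:ℝ)^α)|
        ≤ ∑ k ∈ Finset.Ico 1 n, |count A k - d*k| * (((k:ℝ)+1)^α - (k:ℝ)^α) := by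
      refine (Finset.abs_sum_le_sum_abs _ _).trans (le_of_eq ?_)
      apply Finset.sum_congr rfl
      intro k _
      rw [abs_mul, abs_of_nonneg (hb1 k)]
    have hpart1 : ∑ k ∈ Finset.Ico 1 N, |count A k - d*k| * (((k:ℝ)+1)^α - (k:ℝ)^α)
        ≤ Cst := by
      calc ∑ k ∈ Finset.Ico 1 N, |count A k - d*k| * (((k:ℝ)+1)^α - (k:ℝ)^α)
          ≤ ∑ k ∈ Finset.Ico 1 N, ((1+|d|) * N) * (((k:ℝ)+1)^α - (k:ℝ)^α) := by
            apply Finset.sum_le_sum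
            intro k hk
            apply mul_le_mul_of_nonneg_right _ (hb1 k)
            refine (hEall k).trans ?_
            have hkN : (k:ℝ) ≤ N := by
              have := (Finset.mem_Ico.1 hk).2
              exact_mod_cast this.le
            nlinarith [abs_nonneg d]
        _ = ((1+|d|) * N) * ((N:ℝ)^α - (1:ℝ)^α) := by
            rw [← Finset.mul_sum]
            congr 1
            have := tele_sum (fun k => (k:ℝ)^α) hN1
            simpa using this
        _ ≤ Cst := by
            have h1 : ((1:ℝ))^α = 1 := Real.one_rpow α
            have : (0:ℝ) ≤ (1+|d|) * N := by positivity
            rw [hCdef]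
            nlinarith [Real.rpow_nonneg (Nat.cast_nonneg (α := ℝ) N) α]
    have hpart2 : ∑ k ∈ Finset.Ico N n, |count A k - d*k| * (((k:ℝ)+1)^α - (k:ℝ)^α)
        ≤ ε' * ((n:ℝ) * (n:ℝ)^α) := by
      calc ∑ k ∈ Finset.Ico N n, |count A k - d*k| * (((k:ℝ)+1)^α - (k:ℝ)^α)
          ≤ ∑ k ∈ Finset.Ico N n, (ε' * n) * (((k:ℝ)+1)^α - (k:ℝ)^α) := by
            apply Finset.sum_le_sum
            intro k hk
            apply mul_le_mul_of_nonneg_right _ (hb1 k)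
            rw [Finset.mem_Ico] at hk
            refine (hE k hk.1).trans ?_
            have : (k:ℝ) ≤ n := by exact_mod_cast hk.2.le
            nlinarith [hε'.le]
        _ = (ε' * n) * ((n:ℝ)^α - (N:ℝ)^α) := by
            rw [← Finset.mul_sum]
            congr 1
            have := tele_sum (fun k => (k:ℝ)^α) hn
            simpa using this
        _ ≤ ε' * ((n:ℝ) * (n:ℝ)^α) := by
            have h1 : (0:ℝ) ≤ (N:ℝ)^α := Real.rpow_nonneg (Nat.cast_nonneg _) α
            have h2 : (0:ℝ) ≤ ε' * n := by positivity
            nlinarith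
    have hEn : |count A n - d*n| * (n:ℝ)^α ≤ ε' * ((n:ℝ) * (n:ℝ)^α) := by
      have := hE n hn
      have h1 : (0:ℝ) ≤ (n:ℝ)^α := Real.rpow_nonneg (Nat.cast_nonneg _) α
      nlinarith
    calc |(count A n - d*n) * (n:ℝ)^α
            - ∑ k ∈ Finset.Ico 1 n, (count A k - d*k) * (((k:ℝ)+1)^α - (k:ℝ)^α)|
        ≤ |(count A n - d*n) * (n:ℝ)^α|
            + |∑ k ∈ Finset.Ico 1 n, (count A k - d*k) * (((k:ℝ)+1)^α - (k:ℝ)^α)| :=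
          abs_sub _ _
      _ ≤ |count A n - d*n| * (n:ℝ)^α
            + (Cst + ε' * ((n:ℝ) * (n:ℝ)^α)) := by
          have h1 : |(count A n - d*n) * (n:ℝ)^α| = |count A n - d*n| * (n:ℝ)^α := by
            rw [abs_mul, abs_of_nonneg (Real.rpow_nonneg (Nat.cast_nonneg _) α)]
          rw [h1]
          gcongr
          refine habs.trans ?_
          rw [hsplit, Finset.sum_union hdisj]
          exact add_le_add hpart1 hpart2
      _ ≤ 2*ε' * ((n:ℝ) * (n:ℝ)^α) + Cst := by nlinarith
  -- choose the final threshold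
  set N₂ : ℕ := max (max N 4) (⌈4*Cst/ε⌉₊ + 1) with hN₂def
  refine ⟨N₂, fun n hn => ?_⟩
  have hnN : N ≤ n := le_trans (le_trans (le_max_left _ _) (le_max_left _ _)) hn
  have hn4 : 4 ≤ n := le_trans (le_trans (le_max_right _ _) (le_max_left _ _)) hn
  have hnC : 4*Cst/ε < n := by
    have h1 : (⌈4*Cst/ε⌉₊ + 1 : ℕ) ≤ n := le_trans (le_max_right _ _) hn
    have h2 : 4*Cst/ε ≤ (⌈4*Cst/ε⌉₊ : ℝ) := Nat.le_ceil _
    have h3 : ((⌈4*Cst/ε⌉₊ : ℕ) : ℝ) + 1 ≤ (n:ℝ) := by exact_mod_cast h1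
    linarith
  have hn0 : (0:ℝ) < n := by positivity
  have hTn : (n:ℝ)/2 ≤ aSum Set.univ α n := by
    have h1 := aSum_univ_ge α hα n
    have h2 : (1:ℝ) ≤ ((n:ℝ)/4)^α := by
      have h3 : (1:ℝ) ≤ (n:ℝ)/4 := by
        have : (4:ℝ) ≤ n := by exact_mod_cast hn4
        linarith
      calc (1:ℝ) = (1:ℝ)^α := (Real.one_rpow α).symm
        _ ≤ ((n:ℝ)/4)^α := Real.rpow_le_rpow zero_le_one h3 hα.le
    nlinarith
  have hT0 : (0:ℝ) < aSum Set.univ α n := by linarith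
  rw [Real.dist_eq]
  have heq : aSum A α n / aSum Set.univ α n - d
      = (aSum A α n - d * aSum Set.univ α n) / aSum Set.univ α n := by
    field_simp
  rw [heq, abs_div, abs_of_pos hT0]
  have hnum := hkey n hnN
  calc |aSum A α n - d * aSum Set.univ α n| / aSum Set.univ α n
      ≤ (2*ε' * ((n:ℝ) * (n:ℝ)^α) + Cst) / aSum Set.univ α n := by gcongr
    _ < ε := by
        rw [div_lt_iff₀ hT0]
        have h1 := hnb n
        have h2 : 2*ε' * ((n:ℝ) * (n:ℝ)^α) ≤ 2*ε' * (K * aSum Set.univ α n) := by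
          apply mul_le_mul_of_nonneg_left h1 (by positivity)
        have h3 : 2*ε' * K = ε/2 := by
          rw [hε'def]; field_simp; ring
        have h4 : Cst < ε/4 * n := by
          rw [div_lt_iff₀ hε] at hnC
          nlinarith
        nlinarith
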